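/- arXiv:2604.18211 — 2 statements merged into one kernel-verified Lean document; each statement's English description precedes it below -/
import Mathlib

section
/- Let r > 0 and let u, ũ, w, w̃ be real numbers with |w| < r, |w̃| < r, u > 0, and ũ > 0. Then (w − w̃)(u − ũ) ≤ max{1/(4r), 4r} · ( ũ·|w − w̃|² + u − ũ − ũ·(ln u − ln ũ) ). -/
open Real Set

/-- For `s ≥ 1`: `(s-1)^2/(2s) ≤ s - 1 - log s`. -/
lemma quad_log_ge_one {s : ℝ} (hs : 1 ≤ s) :
    (s - 1)^2 / (2*s) ≤ s - 1 - Real.log s := by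
  set f : ℝ → ℝ := fun x => x/2 - Real.log x - (1/2) * x⁻¹ with hf
  have hder : ∀ x : ℝ, 0 < x → HasDerivAt f ((x-1)^2/(2*x^2)) x := by
    intro x hx
    have h1 : HasDerivAt (fun y : ℝ => y/2) (1/2) x := (hasDerivAt_id x).div_const 2
    have h2 : HasDerivAt Real.log x⁻¹ x := Real.hasDerivAt_log hx.ne'
    have h3 : HasDerivAt (fun y : ℝ => (1/2) * y⁻¹) ((1/2) * (-(x^2)⁻¹)) x :=
      (hasDerivAt_inv hx.ne').const_mul (1/2)
    have := (h1.sub h2).sub h3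
    refine this.congr_deriv ?_
    have hx0 : x ≠ 0 := hx.ne'
    field_simp
    ring
  have hmono : StrictMonoOn f (Ici 1) := by
    apply strictMonoOn_of_deriv_pos (convex_Ici 1)
    · intro x hx
      have hx0 : (0:ℝ) < x := lt_of_lt_of_le one_pos hx
      exact ((hder x hx0).continuousAt).continuousWithinAt
    · intro x hx
      rw [interior_Ici] at hx
      have hx0 : (0:ℝ) < x := lt_trans one_pos hx
      have hx1 : (0:ℝ) < x - 1 := by simpa using sub_pos.mpr (mem_Ioi.mp hx)
      rw [(hder x hx0).deriv]
      exact div_pos (pow_pos hx1 2) (by positivity)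
  have hs0 : (0:ℝ) < s := lt_of_lt_of_le one_pos hs
  have key : s - 1 - Real.log s - (s-1)^2/(2*s) = f s - f 1 := by
    simp only [hf, Real.log_one]
    field_simp
    ring
  rcases eq_or_lt_of_le hs with h | h
  · rw [← h]; norm_num
  · have hpos : 0 < f s - f 1 := sub_pos.mpr (hmono (self_mem_Ici) (mem_Ici.mpr hs) h)
    rw [← key] at hpos
    linarith

/-- For `0 < s ≤ 1`: `(s-1)^2/2 ≤ s - 1 - log s`. -/
lemma quad_log_le_one {s : ℝ} (hs0 : 0 < s) (hs : s ≤ 1) :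
    (s - 1)^2 / 2 ≤ s - 1 - Real.log s := by
  set g : ℝ → ℝ := fun x => x - Real.log x - (x-1)^2/2 with hg
  have hder : ∀ x : ℝ, 0 < x → HasDerivAt g (-((x-1)^2/x)) x := by
    intro x hx
    have h1 : HasDerivAt (fun y : ℝ => y) 1 x := hasDerivAt_id x
    have h2 : HasDerivAt Real.log x⁻¹ x := Real.hasDerivAt_log hx.ne'
    have h3 : HasDerivAt (fun y : ℝ => (y-1)^2/2) ((2 * (x-1)^1 * 1)/2) x :=
      (((hasDerivAt_id x).sub_const 1).pow 2).div_const 2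
    have := (h1.sub h2).sub h3
    refine this.congr_deriv ?_
    have hx0 : x ≠ 0 := hx.ne'
    field_simp
    ring
  have hanti : StrictAntiOn g (Ioc 0 1) := by
    apply strictAntiOn_of_deriv_neg (convex_Ioc 0 1)
    · intro x hx
      exact ((hder x hx.1).continuousAt).continuousWithinAt
    · intro x hx
      rw [interior_Ioc] at hx
      have hx1 : (0:ℝ) < 1 - x := by simpa using sub_pos.mpr hx.2
      rw [(hder x hx.1).deriv]
      have : 0 < (x-1)^2/x := div_pos (by nlinarith) hx.1
      linarith
  have key : s - 1 - Real.log s - (s-1)^2/2 = g s - g 1 := by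
    simp only [hg, Real.log_one]
    ring
  rcases eq_or_lt_of_le hs with h | h
  · rw [h]; norm_num
  · have hpos : 0 < g s - g 1 := sub_pos.mpr (hanti (mem_Ioc.mpr ⟨hs0, hs⟩) (mem_Ioc.mpr ⟨one_pos, le_refl 1⟩) h)
    rw [← key] at hpos
    linarith

lemma core_ineq (r d s : ℝ) (hr : 0 < r) (hd : |d| ≤ 2*r) (hs : 0 < s) :
    d * (s - 1) ≤ max (1/(4*r)) (4*r) * (d^2 + s - 1 - Real.log s) := by
  set C := max (1/(4*r)) (4*r) with hCdef
  have hr4 : (0:ℝ) < 4*r := by linarith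
  have hC1 : 1/(4*r) ≤ C := le_max_left _ _
  have hC2 : 4*r ≤ C := le_max_right _ _
  have hC0 : 0 < C := lt_of_lt_of_le hr4 hC2
  have hCr : 1 ≤ 4*r*C := by
    have h := (div_le_iff₀ hr4).mp hC1
    linarith
  have hCone : 1 ≤ C := by nlinarith
  have hCC : 1 ≤ C*C := by nlinarith
  obtain ⟨hd2, hd1⟩ := abs_le.mp hd
  have hF0 : Real.log s ≤ s - 1 := Real.log_le_sub_one_of_pos hs
  rcases le_or_gt s 1 with h1 | h1
  · -- Case A : s ≤ 1
    have hL : (s - 1)^2 ≤ 2 * (s - 1 - Real.log s) := by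
      have := quad_log_le_one hs h1
      linarith
    nlinarith [sq_nonneg (2*C*d - (s-1)), hC0,
      mul_le_mul_of_nonneg_left hL (by positivity : (0:ℝ) ≤ C*C),
      mul_nonneg (by nlinarith : (0:ℝ) ≤ 2*C*C - 1) (sq_nonneg (s-1))]
  · rcases le_or_gt s (2*C^2) with h2 | h2
    · -- Case B : 1 ≤ s ≤ 2C²
      have hL : (s - 1)^2 ≤ 2*s*(s - 1 - Real.log s) := by
        have h := quad_log_ge_one h1.le
        rw [div_le_iff₀ (by positivity)] at h
        linarith [h]
      nlinarith [mul_nonneg hs.le (sq_nonneg (2*C*d - (s-1))), hC0,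
        mul_le_mul_of_nonneg_left hL (by positivity : (0:ℝ) ≤ C*C),
        mul_nonneg (by nlinarith : (0:ℝ) ≤ 2*C^2 - s) (sq_nonneg (s-1))]
    · -- Case C : s > 2C²
      have hs2 : 2 ≤ s := by linarith [hCC, h2]
      have hs4rC : C*(2*r + d) ≤ s - 1 := by
        linarith [mul_nonneg hC0.le (by linarith : (0:ℝ) ≤ 2*r - d),
          mul_nonneg hC0.le (by linarith : (0:ℝ) ≤ C - 4*r), hCC, h2]
      have hi : d*(s-1) - C*d^2 ≤ 2*r*(s-1) - C*(2*r)^2 := by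
        linarith [mul_nonneg (by linarith : (0:ℝ) ≤ 2*r - d) (sub_nonneg.mpr hs4rC)]
      have hlog2 : Real.log 2 < 0.6931472 := by
        linarith [Real.log_two_lt_d9]
      have hslog : Real.log s ≤ Real.log 2 + (s/2 - 1) := by
        have h := Real.log_le_sub_one_of_pos (show 0 < s/2 by linarith)
        have heq : Real.log (s/2) = Real.log s - Real.log 2 :=
          Real.log_div (by linarith) (by norm_num)
        linarith
      have hQ : (0:ℝ) ≤ (s - 1 - Real.log s) + (2*r)^2 := by
        have : (0:ℝ) ≤ (2*r)^2 := sq_nonneg _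
        linarith
      have hii : 2*r*(s-1) - C*(2*r)^2 ≤ C * (s - 1 - Real.log s) := by
        rcases le_or_gt r (1/4) with hr1 | hr1
        · have hr2 : r^2 ≤ 1/16 := by
            rw [pow_two]
            exact (mul_le_mul hr1 hr1 hr.le (by norm_num)).trans_eq (by norm_num)
          have key : 8*r^2*(s-1) ≤ (s - 1 - Real.log s) + 4*r^2 := by
            linarith [mul_nonneg (by linarith : (0:ℝ) ≤ s - 2)
              (by linarith : (0:ℝ) ≤ 1/2 - 8*r^2), hslog, hlog2]
          have h' : 2*r*(s-1) ≤ (1/(4*r))*((s - 1 - Real.log s)+(2*r)^2) := by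
            rw [div_mul_eq_mul_div, le_div_iff₀ hr4]
            nlinarith [key]
          have h'' := h'.trans (mul_le_mul_of_nonneg_right hC1 hQ)
          linarith [h'']
        · have hr2 : 1/16 ≤ r^2 := by
            rw [pow_two]
            refine le_trans (by norm_num) (mul_le_mul hr1.le hr1.le (by norm_num) hr.le)
          have key : 2*Real.log s ≤ (s-1) + 8*r^2 := by
            linarith [hslog, hlog2, hr2]
          have h' : 2*r*(s-1) ≤ (4*r)*((s - 1 - Real.log s)+(2*r)^2) := by
            linarith [mul_nonneg hr.le
              (by linarith : (0:ℝ) ≤ (s-1) - 2*Real.log s + 8*r^2)]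
          have h'' := h'.trans (mul_le_mul_of_nonneg_right hC2 hQ)
          linarith [h'']
      linarith [hi, hii]

/-- Fenchel–Young type estimate (Lemma on product of differences):
for `|w|, |w̃| < r` and `u, ũ > 0`,
`(w − w̃)(u − ũ) ≤ max{1/(4r), 4r}·(ũ|w − w̃|² + u − ũ − ũ(ln u − ln ũ))`. -/
theorem fenchel_young_product_estimate
    (r u ut w wt : ℝ) (hr : 0 < r) (hw : |w| < r) (hwt : |wt| < r)
    (hu : 0 < u) (hut : 0 < ut) :
    (w - wt) * (u - ut) ≤
      max (1 / (4 * r)) (4 * r) *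
        (ut * |w - wt| ^ 2 + u - ut - ut * (Real.log u - Real.log ut)) := by
  set d := w - wt with hddef
  set s := u / ut with hsdef
  have hs : 0 < s := div_pos hu hut
  have hdle : |d| ≤ 2*r := by
    calc |d| ≤ |w| + |wt| := abs_sub _ _
    _ ≤ 2*r := by linarith
  have hcore := core_ineq r d s hr hdle hs
  have hmul := mul_le_mul_of_nonneg_left hcore hut.le
  have hlog : Real.log s = Real.log u - Real.log ut := Real.log_div hu.ne' hut.ne'
  have hus : ut * s = u := by rw [hsdef]; field_simp
  have hL : ut * (d * (s - 1)) = (w - wt) * (u - ut) := by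
    linear_combination (w - wt) * hus
  have hR : ut * (max (1 / (4 * r)) (4 * r) * (d^2 + s - 1 - Real.log s)) =
      max (1 / (4 * r)) (4 * r) *
        (ut * |w - wt| ^ 2 + u - ut - ut * (Real.log u - Real.log ut)) := by
    rw [hlog, sq_abs, ← hddef, ← hus]; ring
  rw [hL, hR] at hmul
  exact hmul
end

section
/- Let g : [0,T] → ℝ be bounded and suppose there is a constant c̃ > 0 such that g(t+h) − g(t) ≤ c̃·h for all t ∈ [0,T) and all sufficiently small h > 0 with t+h ≤ T. Then g has bounded total variation on [0,T], with TV(g,[0,T]) ≤ |g(T) − g(0)| + 2c̃·T. -/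
/-- If `g : [0,T] → ℝ` is bounded and satisfies the one-sided increment bound
`g(t+h) − g(t) ≤ c̃·h` for all `t` and all sufficiently small `h > 0` with
`t + h ≤ T`, then `g` has bounded total variation on `[0,T]`, with
`TV(g,[0,T]) ≤ |g(T) − g(0)| + 2c̃·T`. -/
theorem bv_of_one_sided_increment_bound
    (T ctil : ℝ) (g : ℝ → ℝ) (hT : 0 < T) (hct : 0 < ctil)
    (hbdd : ∃ K : ℝ, ∀ t ∈ Set.Icc (0:ℝ) T, |g t| ≤ K)
    (hinc : ∃ h₀ > (0:ℝ), ∀ t ∈ Set.Ico (0:ℝ) T, ∀ h : ℝ, 0 < h → h ≤ h₀ →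
      t + h ≤ T → g (t + h) - g t ≤ ctil * h) :
    eVariationOn g (Set.Icc 0 T) ≤ ENNReal.ofReal (|g T - g 0| + 2 * ctil * T) := by
  obtain ⟨h₀, h₀pos, hinc⟩ := hinc
  -- Key: one-sided Lipschitz bound for all s ≤ t in [0,T]
  have keyn : ∀ n : ℕ, ∀ s t : ℝ, s ∈ Set.Icc (0:ℝ) T → t ∈ Set.Icc (0:ℝ) T →
      s ≤ t → t - s ≤ n * h₀ → g t - g s ≤ ctil * (t - s) := by
    intro n
    induction n with
    | zero =>
      intro s t hs ht hst hle
      have h0 : t - s ≤ 0 := by simpa using hle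
      have : t = s := le_antisymm (by linarith) hst
      simp [this]
    | succ n ih =>
      intro s t hs ht hst hle
      rcases eq_or_lt_of_le hst with rfl | hlt
      · simp
      rcases le_or_gt (t - s) h₀ with hsmall | hbig
      · have hsT : s < T := lt_of_lt_of_le hlt ht.2
        have := hinc s ⟨hs.1, hsT⟩ (t - s) (by linarith) hsmall (by linarith [ht.2])
        simpa using this
      · have hsT : s + h₀ ≤ t := by linarith
        have hs' : s + h₀ ∈ Set.Icc (0:ℝ) T := ⟨by linarith [hs.1], by linarith [ht.2]⟩
        have h1 : g (s + h₀) - g s ≤ ctil * h₀ := by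
          have hsT' : s < T := by nlinarith [ht.2]
          exact hinc s ⟨hs.1, hsT'⟩ h₀ h₀pos le_rfl (by linarith [ht.2])
        have h2 : g t - g (s + h₀) ≤ ctil * (t - (s + h₀)) := by
          apply ih (s + h₀) t hs' ht hsT
          have : t - s ≤ (n + 1) * h₀ := by
            simpa [Nat.cast_succ] using hle
          linarith
        nlinarith
  have key : ∀ s t : ℝ, s ∈ Set.Icc (0:ℝ) T → t ∈ Set.Icc (0:ℝ) T → s ≤ t →
      g t - g s ≤ ctil * (t - s) := by
    intro s t hs ht hst
    refine keyn ⌈(t - s) / h₀⌉₊ s t hs ht hst ?_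
    have := Nat.le_ceil ((t - s) / h₀)
    calc t - s = (t - s) / h₀ * h₀ := by field_simp
      _ ≤ (⌈(t - s) / h₀⌉₊ : ℝ) * h₀ := by
          exact mul_le_mul_of_nonneg_right this h₀pos.le
  rw [eVariationOn]
  refine iSup_le ?_
  rintro ⟨n, ⟨u, hu, us⟩⟩
  dsimp only
  -- convert edist sum to real sum
  have hconv : ∑ i ∈ Finset.range n, edist (g (u (i + 1))) (g (u i)) =
      ENNReal.ofReal (∑ i ∈ Finset.range n, |g (u (i + 1)) - g (u i)|) := by
    rw [ENNReal.ofReal_sum_of_nonneg (fun i _ => abs_nonneg _)]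
    refine Finset.sum_congr rfl fun i _ => ?_
    rw [edist_dist, Real.dist_eq]
  rw [hconv]
  apply ENNReal.ofReal_le_ofReal
  -- the real inequality
  have habs : ∀ i ∈ Finset.range n, |g (u (i + 1)) - g (u i)| =
      2 * max (g (u (i + 1)) - g (u i)) 0 - (g (u (i + 1)) - g (u i)) := by
    intro i _
    rcases le_total (g (u (i + 1)) - g (u i)) 0 with h | h
    · rw [abs_of_nonpos h, max_eq_right h]; ring
    · rw [abs_of_nonneg h, max_eq_left h]; ring
  rw [Finset.sum_congr rfl habs, Finset.sum_sub_distrib, Finset.sum_range_sub fun i => g (u i)]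
  have hmax : ∑ i ∈ Finset.range n, 2 * max (g (u (i + 1)) - g (u i)) 0 ≤
      2 * (ctil * (u n - u 0)) := by
    have : ∑ i ∈ Finset.range n, 2 * max (g (u (i + 1)) - g (u i)) 0 ≤
        ∑ i ∈ Finset.range n, 2 * (ctil * (u (i + 1) - u i)) := by
      refine Finset.sum_le_sum fun i _ => ?_
      have hb := key (u i) (u (i + 1)) (us i) (us (i + 1)) (hu (Nat.le_succ i))
      have hnn : 0 ≤ ctil * (u (i + 1) - u i) :=
        mul_nonneg hct.le (sub_nonneg.mpr (hu (Nat.le_succ i)))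
      gcongr
      exact max_le hb hnn
    calc _ ≤ ∑ i ∈ Finset.range n, 2 * (ctil * (u (i + 1) - u i)) := this
      _ = 2 * (ctil * (u n - u 0)) := by
        rw [← Finset.mul_sum]
        congr 1
        rw [← Finset.mul_sum, Finset.sum_range_sub fun i => u i]
  -- bound g (u 0) - g (u n)
  have h0T : (0:ℝ) ∈ Set.Icc (0:ℝ) T := ⟨le_rfl, hT.le⟩
  have hTT : T ∈ Set.Icc (0:ℝ) T := ⟨hT.le, le_rfl⟩
  have h1 := key 0 (u 0) h0T (us 0) (us 0).1
  have h2 := key (u n) T (us n) hTT (us n).2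
  have h3 : g 0 - g T ≤ |g T - g 0| := by
    rw [← neg_sub]
    exact neg_le_abs _
  have hun : u 0 ≤ u n := hu (Nat.zero_le n)
  have hu0 := (us 0).1
  have hunT := (us n).2
  nlinarith [hmax]
end
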